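/- Define the inverse cross ratio of four reals by χ(a,b,c,d) = (a−b)(c−d)/((a−c)(b−d)). Let the birational map on 2n-periodic sequences (xⱼ)ⱼ∈ℤ/2n be given by x'₂ᵢ = x₂ᵢ₋₂ · (x₂ᵢ₋₄ + x₂ᵢ₋₁ − 1)/(x₂ᵢ₋₂x₂ᵢ₋₁ − (1 − x₂ᵢ₊₁)(1 − x₂ᵢ₋₄)) and x'₂ᵢ₊₁ = x₂ᵢ₊₃ · (x₂ᵢ₊₂ + x₂ᵢ₊₅ − 1)/(x₂ᵢ₊₂x₂ᵢ₊₃ − (1 − x₂ᵢ₊₅)(1 − x₂ᵢ)). Then the quantity 𝓕₃ = ∏ᵢ₌₀ⁿ⁻¹ x₂ᵢ/x₂ᵢ₊₁ is invariant: ∏ᵢ x'₂ᵢ/x'₂ᵢ₊₁ = ∏ᵢ x₂ᵢ/x₂ᵢ₊₁, provided all denominators involved are nonzero. -/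

import Mathlib

open scoped BigOperators

private def Af (x : ℤ → ℝ) (i : ℤ) : ℝ := x (2*i-4) + x (2*i-1) - 1
private def Df (x : ℤ → ℝ) (i : ℤ) : ℝ :=
  x (2*i-2) * x (2*i-1) - (1 - x (2*i+1)) * (1 - x (2*i-4))

private lemma shift1 (n : ℕ) (f : ℤ → ℝ) (hf : ∀ j : ℤ, f (j + n) = f j) :
    ∏ i ∈ Finset.range n, f ((i : ℤ) + 1) = ∏ i ∈ Finset.range n, f i := by
  cases n with
  | zero => simp
  | succ m =>
    calc ∏ i ∈ Finset.range (m+1), f ((i:ℤ)+1)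
        = ∏ i ∈ Finset.range (m+1), f (((i+1 : ℕ) : ℤ)) :=
          Finset.prod_congr rfl (fun i _ => by push_cast; ring_nf)
      _ = (∏ i ∈ Finset.range m, f (((i+1:ℕ)):ℤ)) * f (((m+1:ℕ)):ℤ) :=
          Finset.prod_range_succ _ m
      _ = (∏ i ∈ Finset.range m, f (((i+1:ℕ)):ℤ)) * f (((0:ℕ)):ℤ) := by
          have h := hf 0
          push_cast at h ⊢
          rw [zero_add] at h
          rw [h]
      _ = ∏ i ∈ Finset.range (m+1), f i := (Finset.prod_range_succ' (fun i => f i) m).symm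

private lemma shiftk (n k : ℕ) (f : ℤ → ℝ) (hf : ∀ j : ℤ, f (j + n) = f j) :
    ∏ i ∈ Finset.range n, f ((i : ℤ) + k) = ∏ i ∈ Finset.range n, f i := by
  induction k with
  | zero => simp
  | succ k ih =>
    have h1 := shift1 n (fun j => f (j + k))
      (fun j => by rw [add_right_comm]; exact hf (j + k))
    calc ∏ i ∈ Finset.range n, f ((i:ℤ) + ((k:ℕ)+1 : ℕ))
        = ∏ i ∈ Finset.range n, f (((i:ℤ) + 1) + k) :=
          Finset.prod_congr rfl (fun i _ => by push_cast; ring_nf)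
      _ = ∏ i ∈ Finset.range n, f ((i:ℤ) + k) := h1
      _ = _ := ih

theorem stmt13 (n : ℕ) (hn : 2 ≤ n) (x x' : ℤ → ℝ)
    (hper : ∀ j : ℤ, x (j + 2*n) = x j)
    (hdenom_even : ∀ i : ℤ,
      x (2*i-2) * x (2*i-1) - (1 - x (2*i+1)) * (1 - x (2*i-4)) ≠ 0)
    (hdenom_odd : ∀ i : ℤ,
      x (2*i+2) * x (2*i+3) - (1 - x (2*i+5)) * (1 - x (2*i)) ≠ 0)
    (hx_odd : ∀ i : ℤ, x (2*i+1) ≠ 0)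
    (hx'_odd : ∀ i : ℤ, x' (2*i+1) ≠ 0)
    (heven : ∀ i : ℤ, x' (2*i) =
      x (2*i-2) * (x (2*i-4) + x (2*i-1) - 1)
        / (x (2*i-2) * x (2*i-1) - (1 - x (2*i+1)) * (1 - x (2*i-4))))
    (hodd : ∀ i : ℤ, x' (2*i+1) =
      x (2*i+3) * (x (2*i+2) + x (2*i+5) - 1)
        / (x (2*i+2) * x (2*i+3) - (1 - x (2*i+5)) * (1 - x (2*i)))) :
    ∏ i ∈ Finset.range n, x' (2*i) / x' (2*i+1)
      = ∏ i ∈ Finset.range n, x (2*i) / x (2*i+1) := by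
  -- basic nonvanishing facts
  have hD : ∀ i : ℤ, Df x i ≠ 0 := hdenom_even
  have hD2 : ∀ i : ℤ, Df x (i+2) ≠ 0 := by
    intro i
    have h := hdenom_odd i
    simp only [Df]
    rw [show 2*(i+2)-2 = 2*i+2 by ring, show 2*(i+2)-1 = 2*i+3 by ring,
        show 2*(i+2)+1 = 2*i+5 by ring, show 2*(i+2)-4 = 2*i by ring]
    exact h
  have hx3 : ∀ i : ℤ, x (2*i+3) ≠ 0 := by
    intro i
    have h := hx_odd (i+1)
    rwa [show 2*(i+1)+1 = 2*i+3 by ring] at h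
  have hodd' : ∀ i : ℤ, x' (2*i+1) = x (2*i+3) * Af x (i+3) / Df x (i+2) := by
    intro i
    rw [hodd i]
    simp only [Af, Df]
    rw [show 2*(i+3)-4 = 2*i+2 by ring, show 2*(i+3)-1 = 2*i+5 by ring,
        show 2*(i+2)-2 = 2*i+2 by ring, show 2*(i+2)-1 = 2*i+3 by ring,
        show 2*(i+2)+1 = 2*i+5 by ring, show 2*(i+2)-4 = 2*i by ring]
  have hA3 : ∀ i : ℤ, Af x (i+3) ≠ 0 := by
    intro i h
    apply hx'_odd i
    rw [hodd' i, h, mul_zero, zero_div]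
  have hAne : ∀ j : ℤ, Af x j ≠ 0 := by
    intro j
    have h := hA3 (j-3)
    rwa [sub_add_cancel] at h
  have heven' : ∀ i : ℤ, x' (2*i) = x (2*i-2) * Af x i / Df x i := by
    intro i
    rw [heven i]
    simp only [Af, Df]
  -- per-term formula
  have hterm : ∀ i : ℤ, x' (2*i) / x' (2*i+1)
      = (x (2*i-2) * Af x i * Df x (i+2)) / (x (2*i+3) * Af x (i+3) * Df x i) := by
    intro i
    rw [heven' i, hodd' i]
    field_simp
  -- periodicity of the building blocks (period n in the index)
  have hper2 : ∀ (c j : ℤ), x (2*(j+(n:ℤ))+c) = x (2*j+c) := by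
    intro c j
    rw [show 2*(j+(n:ℤ))+c = (2*j+c) + 2*(n:ℤ) by ring]
    exact hper _
  have hfe : ∀ j : ℤ, x (2*(j+(n:ℤ))-2) = x (2*j-2) := by
    intro j
    rw [show 2*(j+(n:ℤ))-2 = 2*(j+(n:ℤ))+(-2) by ring, hper2, show 2*j+(-2) = 2*j-2 by ring]
  have hfo : ∀ j : ℤ, x (2*(j+(n:ℤ))+1) = x (2*j+1) := fun j => hper2 1 j
  have hAper : ∀ j : ℤ, Af x (j + (n:ℤ)) = Af x j := by
    intro j
    simp only [Af]
    rw [show 2*(j+(n:ℤ))-4 = 2*(j+(n:ℤ))+(-4) by ring,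
        show 2*(j+(n:ℤ))-1 = 2*(j+(n:ℤ))+(-1) by ring, hper2, hper2,
        show 2*j+(-4) = 2*j-4 by ring, show 2*j+(-1) = 2*j-1 by ring]
  have hDper : ∀ j : ℤ, Df x (j + (n:ℤ)) = Df x j := by
    intro j
    simp only [Df]
    rw [show 2*(j+(n:ℤ))-2 = 2*(j+(n:ℤ))+(-2) by ring,
        show 2*(j+(n:ℤ))-1 = 2*(j+(n:ℤ))+(-1) by ring,
        show 2*(j+(n:ℤ))-4 = 2*(j+(n:ℤ))+(-4) by ring, hper2, hper2, hper2, hper2,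
        show 2*j+(-2) = 2*j-2 by ring, show 2*j+(-1) = 2*j-1 by ring,
        show 2*j+(-4) = 2*j-4 by ring]
  -- product shift identities
  have hE : ∏ i ∈ Finset.range n, x (2*(i:ℤ)-2) = ∏ i ∈ Finset.range n, x (2*(i:ℤ)) := by
    have h := shiftk n 1 (fun j => x (2*j-2)) hfe
    rw [← h]
    exact Finset.prod_congr rfl (fun i _ => by push_cast; ring_nf)
  have hO : ∏ i ∈ Finset.range n, x (2*(i:ℤ)+3) = ∏ i ∈ Finset.range n, x (2*(i:ℤ)+1) := by
    have h := shiftk n 1 (fun j => x (2*j+1)) hfo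
    rw [← h]
    exact Finset.prod_congr rfl (fun i _ => by push_cast; ring_nf)
  have hA : ∏ i ∈ Finset.range n, Af x ((i:ℤ)+3) = ∏ i ∈ Finset.range n, Af x (i:ℤ) := by
    have h := shiftk n 3 (fun j => Af x j) hAper
    rw [← h]
    exact Finset.prod_congr rfl (fun i _ => by norm_num)
  have hDsh : ∏ i ∈ Finset.range n, Df x ((i:ℤ)+2) = ∏ i ∈ Finset.range n, Df x (i:ℤ) := by
    have h := shiftk n 2 (fun j => Df x j) hDper
    rw [← h]
    exact Finset.prod_congr rfl (fun i _ => by norm_num)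
  -- assemble
  have hPA : ∏ i ∈ Finset.range n, Af x (i:ℤ) ≠ 0 :=
    Finset.prod_ne_zero_iff.2 (fun i _ => hAne i)
  have hPD : ∏ i ∈ Finset.range n, Df x (i:ℤ) ≠ 0 :=
    Finset.prod_ne_zero_iff.2 (fun i _ => hD i)
  have hPO : ∏ i ∈ Finset.range n, x (2*(i:ℤ)+1) ≠ 0 :=
    Finset.prod_ne_zero_iff.2 (fun i _ => hx_odd i)
  calc ∏ i ∈ Finset.range n, x' (2*(i:ℤ)) / x' (2*(i:ℤ)+1)
      = ∏ i ∈ Finset.range n,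
          (x (2*(i:ℤ)-2) * Af x (i:ℤ) * Df x ((i:ℤ)+2))
            / (x (2*(i:ℤ)+3) * Af x ((i:ℤ)+3) * Df x (i:ℤ)) :=
        Finset.prod_congr rfl (fun i _ => hterm i)
    _ = ((∏ i ∈ Finset.range n, x (2*(i:ℤ)-2)) * (∏ i ∈ Finset.range n, Af x (i:ℤ))
            * (∏ i ∈ Finset.range n, Df x ((i:ℤ)+2)))
          / ((∏ i ∈ Finset.range n, x (2*(i:ℤ)+3)) * (∏ i ∈ Finset.range n, Af x ((i:ℤ)+3))
            * (∏ i ∈ Finset.range n, Df x (i:ℤ))) := by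
        rw [Finset.prod_div_distrib, Finset.prod_mul_distrib, Finset.prod_mul_distrib,
            Finset.prod_mul_distrib, Finset.prod_mul_distrib]
    _ = ((∏ i ∈ Finset.range n, x (2*(i:ℤ))) * (∏ i ∈ Finset.range n, Af x (i:ℤ))
            * (∏ i ∈ Finset.range n, Df x (i:ℤ)))
          / ((∏ i ∈ Finset.range n, x (2*(i:ℤ)+1)) * (∏ i ∈ Finset.range n, Af x (i:ℤ))
            * (∏ i ∈ Finset.range n, Df x (i:ℤ))) := by
        rw [hE, hO, hA, hDsh]
    _ = (∏ i ∈ Finset.range n, x (2*(i:ℤ))) / (∏ i ∈ Finset.range n, x (2*(i:ℤ)+1)) := by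
        rw [mul_div_mul_right _ _ hPD, mul_div_mul_right _ _ hPA]
    _ = ∏ i ∈ Finset.range n, x (2*(i:ℤ)) / x (2*(i:ℤ)+1) := (Finset.prod_div_distrib _ _).symm
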